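/- arXiv:2601.04482 — 2 statements merged into one kernel-verified Lean document; each statement's English description precedes it below -/
import Mathlib

section
/- Let J be a real m×n matrix and λ > 0, and set P^λ = J (JᵀJ + λ²I)⁻¹ Jᵀ. Then for every f ∈ ℝᵐ, ‖P^λ f‖ ≤ (‖J‖²/(‖J‖² + λ²)) ‖f‖, where ‖J‖ is the ℓ²→ℓ² operator norm of J. In particular ‖P^λ f‖ < ‖f‖ for every nonzero f, i.e., the regularized projection is a strict contraction on ℝᵐ. -/
open Matrix RealInnerProductSpace

set_option maxHeartbeats 1000000

/-- The regularized projection `P^λ = J (JᵀJ + λ²I)⁻¹ Jᵀ` satisfies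
`‖P^λ f‖ ≤ (‖J‖²/(‖J‖² + λ²)) ‖f‖` for every `f ∈ ℝᵐ`, where `‖J‖` is the
`ℓ² → ℓ²` operator norm of `J`; in particular `‖P^λ f‖ < ‖f‖` for `f ≠ 0`. -/
theorem stmt_3 (m n : ℕ) (J : Matrix (Fin m) (Fin n) ℝ) (lam : ℝ) (hlam : 0 < lam) :
    (∀ f : EuclideanSpace ℝ (Fin m),
        ‖Matrix.toEuclideanLin
            (J * (Jᵀ * J + lam ^ 2 • (1 : Matrix (Fin n) (Fin n) ℝ))⁻¹ * Jᵀ) f‖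
          ≤ (‖LinearMap.toContinuousLinearMap (Matrix.toEuclideanLin J)‖ ^ 2 /
              (‖LinearMap.toContinuousLinearMap (Matrix.toEuclideanLin J)‖ ^ 2 + lam ^ 2))
            * ‖f‖) ∧
    ∀ f : EuclideanSpace ℝ (Fin m), f ≠ 0 →
      ‖Matrix.toEuclideanLin
          (J * (Jᵀ * J + lam ^ 2 • (1 : Matrix (Fin n) (Fin n) ℝ))⁻¹ * Jᵀ) f‖ < ‖f‖ := by
  classical
  set s : ℝ := ‖LinearMap.toContinuousLinearMap (Matrix.toEuclideanLin J)‖ with hs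
  have hs0 : (0:ℝ) ≤ s := norm_nonneg _
  have hpos : (0:ℝ) < s ^ 2 + lam ^ 2 := by nlinarith [sq_nonneg s]
  -- composition law for toEuclideanLin
  have hmul : ∀ {k l p : ℕ} (A : Matrix (Fin k) (Fin l) ℝ) (B : Matrix (Fin l) (Fin p) ℝ)
      (x : EuclideanSpace ℝ (Fin p)),
      Matrix.toEuclideanLin (A * B) x = Matrix.toEuclideanLin A (Matrix.toEuclideanLin B x) := by
    intro k l p A B x
    simp [Matrix.toEuclideanLin_apply, Matrix.mulVec_mulVec]
  have hone : ∀ {k : ℕ} (x : EuclideanSpace ℝ (Fin k)),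
      Matrix.toEuclideanLin (1 : Matrix (Fin k) (Fin k) ℝ) x = x := by
    intro k x; simp [Matrix.toEuclideanLin_apply]
  have hadj : Matrix.toEuclideanLin Jᵀ = LinearMap.adjoint (Matrix.toEuclideanLin J) := by
    rw [← Matrix.conjTranspose_eq_transpose_of_trivial,
      Matrix.toEuclideanLin_conjTranspose_eq_adjoint]
  have hJ : ∀ x : EuclideanSpace ℝ (Fin n), ‖Matrix.toEuclideanLin J x‖ ≤ s * ‖x‖ := by
    intro x
    simpa using (LinearMap.toContinuousLinearMap (Matrix.toEuclideanLin J)).le_opNorm x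
  have hJT : ∀ g : EuclideanSpace ℝ (Fin m), ‖Matrix.toEuclideanLin Jᵀ g‖ ≤ s * ‖g‖ := by
    intro g
    set u : EuclideanSpace ℝ (Fin n) := Matrix.toEuclideanLin Jᵀ g with hu
    rcases eq_or_lt_of_le (norm_nonneg u) with h0 | h0
    · rw [← h0]; positivity
    · have h1 : ‖u‖ ^ 2 = ⟪g, Matrix.toEuclideanLin J u⟫ := by
        have hx := LinearMap.adjoint_inner_left (Matrix.toEuclideanLin J) u g
        rw [← hx, ← hadj, ← hu, real_inner_self_eq_norm_sq]
      have h2 : ⟪g, Matrix.toEuclideanLin J u⟫ ≤ ‖g‖ * ‖Matrix.toEuclideanLin J u‖ :=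
        real_inner_le_norm _ _
      have h3 := hJ u
      nlinarith [norm_nonneg g, norm_nonneg (Matrix.toEuclideanLin J u)]
  -- matrices
  set B : Matrix (Fin n) (Fin n) ℝ := Jᵀ * J + lam ^ 2 • (1 : Matrix (Fin n) (Fin n) ℝ) with hBdef
  set D : Matrix (Fin m) (Fin m) ℝ := J * Jᵀ + lam ^ 2 • (1 : Matrix (Fin m) (Fin m) ℝ) with hDdef
  have hsm : ∀ k : ℕ, (lam ^ 2 • (1 : Matrix (Fin k) (Fin k) ℝ)).PosDef := by
    intro k
    rw [Matrix.smul_one_eq_diagonal]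
    exact Matrix.posDef_diagonal_iff.mpr (fun _ => by positivity)
  have hBpd : B.PosDef := by
    have h := Matrix.posSemidef_conjTranspose_mul_self J
    rw [Matrix.conjTranspose_eq_transpose_of_trivial] at h
    exact Matrix.PosDef.posSemidef_add h (hsm n)
  have hDpd : D.PosDef := by
    have h := Matrix.posSemidef_self_mul_conjTranspose J
    rw [Matrix.conjTranspose_eq_transpose_of_trivial] at h
    exact Matrix.PosDef.posSemidef_add h (hsm m)
  have hdetB : IsUnit B.det := (Matrix.isUnit_iff_isUnit_det B).mp hBpd.isUnit
  have hdetD : IsUnit D.det := (Matrix.isUnit_iff_isUnit_det D).mp hDpd.isUnit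
  have h1 : D * J = J * B := by
    rw [hBdef, hDdef]
    simp [Matrix.add_mul, Matrix.mul_add, Matrix.smul_mul, Matrix.mul_smul, Matrix.mul_assoc]
  have h2 : J * B⁻¹ = D⁻¹ * J := by
    have h := congrArg (fun M => D⁻¹ * M * B⁻¹) h1
    simp only [← Matrix.mul_assoc] at h
    rw [Matrix.nonsing_inv_mul _ hdetD, Matrix.one_mul, Matrix.mul_assoc _ B B⁻¹,
      Matrix.mul_nonsing_inv _ hdetB, Matrix.mul_one] at h
    exact h
  have hcomm : (J * Jᵀ) * D = D * (J * Jᵀ) := by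
    rw [hDdef]
    simp [Matrix.add_mul, Matrix.mul_add, Matrix.smul_mul, Matrix.mul_smul, Matrix.mul_assoc]
  have h3 : D⁻¹ * (J * Jᵀ) = (J * Jᵀ) * D⁻¹ := by
    have h := congrArg (fun M => D⁻¹ * M * D⁻¹) hcomm
    simp only [← Matrix.mul_assoc] at h
    rw [Matrix.mul_assoc _ D D⁻¹, Matrix.mul_nonsing_inv _ hdetD, Matrix.mul_one,
      Matrix.nonsing_inv_mul _ hdetD, Matrix.one_mul] at h
    rw [← Matrix.mul_assoc]
    exact h
  have key : J * B⁻¹ * Jᵀ = (J * Jᵀ) * D⁻¹ := by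
    rw [h2, Matrix.mul_assoc, ← h3, ← Matrix.mul_assoc]
  -- main estimate
  have key2 : ∀ f : EuclideanSpace ℝ (Fin m),
      ‖Matrix.toEuclideanLin (J * B⁻¹ * Jᵀ) f‖ * (s ^ 2 + lam ^ 2) ≤ s ^ 2 * ‖f‖ := by
    intro f
    set g : EuclideanSpace ℝ (Fin m) := Matrix.toEuclideanLin D⁻¹ f with hg
    set u : EuclideanSpace ℝ (Fin n) := Matrix.toEuclideanLin Jᵀ g with hu
    have hTg : Matrix.toEuclideanLin (J * B⁻¹ * Jᵀ) f = Matrix.toEuclideanLin J u := by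
      rw [key, hmul, ← hg, hmul, ← hu]
    have hfD : Matrix.toEuclideanLin D g = f := by
      rw [hg, ← hmul, Matrix.mul_nonsing_inv _ hdetD, hone]
    have hf : f = Matrix.toEuclideanLin J u + lam ^ 2 • g := by
      rw [← hfD, hDdef, map_add, LinearMap.add_apply, hmul, ← hu]
      congr 1
      rw [_root_.map_smul, LinearMap.smul_apply, hone]
    have hinner : ⟪Matrix.toEuclideanLin J u, g⟫ = ‖u‖ ^ 2 := by
      rw [real_inner_comm, ← LinearMap.adjoint_inner_left, ← hadj, ← hu,
        real_inner_self_eq_norm_sq]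
    set a : ℝ := ‖Matrix.toEuclideanLin J u‖ with ha
    set b : ℝ := ‖u‖ with hb
    set c : ℝ := ‖g‖ with hc
    have ha0 : 0 ≤ a := norm_nonneg _
    have hb0 : 0 ≤ b := norm_nonneg _
    have hc0 : 0 ≤ c := norm_nonneg _
    have hab : a ≤ s * b := hJ u
    have hbc : b ≤ s * c := hJT g
    have hF2 : ‖f‖ ^ 2 = a ^ 2 + 2 * lam ^ 2 * b ^ 2 + (lam ^ 2) ^ 2 * c ^ 2 := by
      rw [hf, norm_add_sq_real, real_inner_smul_right, hinner, norm_smul]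
      rw [Real.norm_eq_abs, abs_of_nonneg (by positivity : (0:ℝ) ≤ lam ^ 2)]
      ring
    have ha2 : a ^ 2 ≤ s ^ 2 * b ^ 2 := by nlinarith
    have hb2 : b ^ 2 ≤ s ^ 2 * c ^ 2 := by nlinarith
    have hac2 : a ^ 2 ≤ s ^ 2 * (s ^ 2 * c ^ 2) := by nlinarith [sq_nonneg s]
    have hsq : (a * (s ^ 2 + lam ^ 2)) ^ 2 ≤ (s ^ 2 * ‖f‖) ^ 2 := by
      have X1 := mul_le_mul_of_nonneg_left ha2 (by positivity : (0:ℝ) ≤ 2 * s ^ 2 * lam ^ 2)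
      have X2 := mul_le_mul_of_nonneg_left hac2 (by positivity : (0:ℝ) ≤ lam ^ 2 * lam ^ 2)
      have expand : (s ^ 2 * ‖f‖) ^ 2 - (a * (s ^ 2 + lam ^ 2)) ^ 2
          = (2 * s ^ 2 * lam ^ 2 * (s ^ 2 * b ^ 2) - 2 * s ^ 2 * lam ^ 2 * a ^ 2)
            + (lam ^ 2 * lam ^ 2 * (s ^ 2 * (s ^ 2 * c ^ 2)) - lam ^ 2 * lam ^ 2 * a ^ 2) := by
        rw [mul_pow, hF2]; ring
      linarith [X1, X2, expand]
    have hL0 : 0 ≤ a * (s ^ 2 + lam ^ 2) := by positivity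
    have hR0 : 0 ≤ s ^ 2 * ‖f‖ := by positivity
    have := Real.sqrt_le_sqrt hsq
    rw [Real.sqrt_sq hL0, Real.sqrt_sq hR0] at this
    rw [hTg]
    exact this
  constructor
  · intro f
    rw [div_mul_eq_mul_div, le_div_iff₀ hpos]
    exact key2 f
  · intro f hf0
    have hF : 0 < ‖f‖ := norm_pos_iff.mpr hf0
    have h := key2 f
    have hr : ‖Matrix.toEuclideanLin (J * B⁻¹ * Jᵀ) f‖ ≤ s ^ 2 / (s ^ 2 + lam ^ 2) * ‖f‖ := by
      rw [div_mul_eq_mul_div, le_div_iff₀ hpos]; exact h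
    have hr1 : s ^ 2 / (s ^ 2 + lam ^ 2) < 1 := (div_lt_one hpos).mpr (by nlinarith)
    calc ‖Matrix.toEuclideanLin (J * B⁻¹ * Jᵀ) f‖
        ≤ s ^ 2 / (s ^ 2 + lam ^ 2) * ‖f‖ := hr
      _ < 1 * ‖f‖ := by exact mul_lt_mul_of_pos_right hr1 hF
      _ = ‖f‖ := one_mul _
end

section
/- Let u, v : ℝ → ℝ be continuously differentiable with compact support, and let M_v = sup_{x∈ℝ} |v′(x)| and M_u = sup_{x∈ℝ} |u′(x)|. Then |∫_ℝ (v(x) − u(x))·(v(x)v′(x) − u(x)u′(x)) dx| ≤ ((1/2)M_v + M_u) ∫_ℝ (v(x) − u(x))² dx. -/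
open MeasureTheory Set

lemma integral_deriv_zero {g : ℝ → ℝ} (hg : ContDiff ℝ 1 g) (hgs : HasCompactSupport g) :
    ∫ x : ℝ, deriv g x = 0 := by
  have hcont : Continuous (deriv g) := (hg.iterate_deriv' 0 1).continuous
  have hsupp : HasCompactSupport (deriv g) := hgs.deriv
  have hint : Integrable (deriv g) := hcont.integrable_of_hasCompactSupport hsupp
  rw [← intervalIntegral.integral_Iic_add_Ioi (b := (0:ℝ)) hint.integrableOn hint.integrableOn,
    hgs.integral_Iic_deriv_eq hg, hgs.integral_Ioi_deriv_eq hg]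
  ring

/-- Nonlinear term bound:
`|∫ (v−u)(v v′ − u u′)| ≤ ((1/2)·sup|v′| + sup|u′|) ∫ (v−u)²`
for `C¹` compactly supported `u, v`. -/
theorem stmt_11 (u v : ℝ → ℝ) (hu : ContDiff ℝ 1 u) (hv : ContDiff ℝ 1 v)
    (hus : HasCompactSupport u) (hvs : HasCompactSupport v) :
    |∫ x : ℝ, (v x - u x) * (v x * deriv v x - u x * deriv u x)|
      ≤ ((1 / 2) * (⨆ x : ℝ, |deriv v x|) + ⨆ x : ℝ, |deriv u x|) *
          ∫ x : ℝ, (v x - u x) ^ 2 := by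
  set Mv := ⨆ x : ℝ, |deriv v x| with hMv
  set Mu := ⨆ x : ℝ, |deriv u x| with hMu
  have hdu : Differentiable ℝ u := hu.differentiable one_ne_zero
  have hdv : Differentiable ℝ v := hv.differentiable one_ne_zero
  have hcu' : Continuous (deriv u) := (hu.iterate_deriv' 0 1).continuous
  have hcv' : Continuous (deriv v) := (hv.iterate_deriv' 0 1).continuous
  -- boundedness of derivatives
  have hbu : BddAbove (range fun x => |deriv u x|) := by
    simpa [Real.norm_eq_abs] using hcu'.norm.bddAbove_range_of_hasCompactSupport hus.deriv.norm
  have hbv : BddAbove (range fun x => |deriv v x|) := by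
    simpa [Real.norm_eq_abs] using hcv'.norm.bddAbove_range_of_hasCompactSupport hvs.deriv.norm
  have hMu_le : ∀ x, |deriv u x| ≤ Mu := fun x => le_ciSup hbu x
  have hMv_le : ∀ x, |deriv v x| ≤ Mv := fun x => le_ciSup hbv x
  -- the auxiliary function g = (1/2) v (v-u)^2
  set g : ℝ → ℝ := fun x => (1/2) * v x * (v x - u x)^2 with hg
  have hgc : ContDiff ℝ 1 g := (contDiff_const.mul hv).mul ((hv.sub hu).pow 2)
  have hgs : HasCompactSupport g := by
    apply HasCompactSupport.intro (hvs.union hus) ?_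
    intro x hx
    simp only [Set.mem_union, not_or] at hx
    have h1 : v x = 0 := image_eq_zero_of_notMem_tsupport hx.1
    have h2 : u x = 0 := image_eq_zero_of_notMem_tsupport hx.2
    simp [hg, h1, h2]
  have hgderiv : ∀ x, deriv g x =
      (1/2) * deriv v x * (v x - u x)^2 + v x * ((v x - u x) * (deriv v x - deriv u x)) := by
    intro x
    have h1 : HasDerivAt v (deriv v x) x := (hdv x).hasDerivAt
    have h2 : HasDerivAt u (deriv u x) x := (hdu x).hasDerivAt
    have : HasDerivAt g ((1/2) * deriv v x * (v x - u x)^2 +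
        ((1/2) * v x) * (2 * (v x - u x) ^ 1 * (deriv v x - deriv u x))) x := by
      exact ((h1.const_mul (1/2: ℝ)).mul ((h1.sub h2).pow 2))
    rw [this.deriv]; ring
  have hzero : ∫ x : ℝ, deriv g x = 0 := integral_deriv_zero hgc hgs
  -- pointwise identity
  have hpoint : ∀ x, (v x - u x) * (v x * deriv v x - u x * deriv u x)
      = ((v x - u x)^2 * deriv u x - (1/2) * deriv v x * (v x - u x)^2) + deriv g x := by
    intro x; rw [hgderiv x]; ring
  -- the integrand without the exact-derivative part
  set f : ℝ → ℝ := fun x => (v x - u x)^2 * deriv u x - (1/2) * deriv v x * (v x - u x)^2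
    with hf
  have hfc : Continuous f := by
    apply Continuous.sub
    · exact (((hv.sub hu).continuous).pow 2).mul hcu'
    · exact (continuous_const.mul hcv').mul (((hv.sub hu).continuous).pow 2)
  have hfs : HasCompactSupport f := by
    apply HasCompactSupport.intro (hvs.union hus) ?_
    intro x hx
    simp only [Set.mem_union, not_or] at hx
    have h1 : v x = 0 := image_eq_zero_of_notMem_tsupport hx.1
    have h2 : u x = 0 := image_eq_zero_of_notMem_tsupport hx.2
    simp [hf, h1, h2]
  have hfint : Integrable f := hfc.integrable_of_hasCompactSupport hfs
  have hgint : Integrable (deriv g) :=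
    (hgc.iterate_deriv' 0 1).continuous.integrable_of_hasCompactSupport hgs.deriv
  have hsqc : Continuous (fun x => (v x - u x)^2) := ((hv.sub hu).continuous).pow 2
  have hsqs : HasCompactSupport (fun x => (v x - u x)^2) := by
    apply HasCompactSupport.intro (hvs.union hus) ?_
    intro x hx
    simp only [Set.mem_union, not_or] at hx
    have h1 : v x = 0 := image_eq_zero_of_notMem_tsupport hx.1
    have h2 : u x = 0 := image_eq_zero_of_notMem_tsupport hx.2
    simp [h1, h2]
  have hsqint : Integrable (fun x => (v x - u x)^2) :=
    hsqc.integrable_of_hasCompactSupport hsqs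
  have heq : ∫ x : ℝ, (v x - u x) * (v x * deriv v x - u x * deriv u x)
      = ∫ x : ℝ, f x := by
    have : ∫ x : ℝ, (v x - u x) * (v x * deriv v x - u x * deriv u x)
        = ∫ x : ℝ, (f x + deriv g x) := by
      congr 1; ext x; rw [hpoint x]
    rw [this, integral_add hfint hgint, hzero, add_zero]
  rw [heq]
  calc |∫ x : ℝ, f x| ≤ ∫ x : ℝ, |f x| := by
        simpa [Real.norm_eq_abs] using norm_integral_le_integral_norm f
    _ ≤ ∫ x : ℝ, ((1/2) * Mv + Mu) * (v x - u x)^2 := by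
        apply integral_mono hfint.abs (hsqint.const_mul _)
        intro x
        have h1 : |f x| ≤ (v x - u x)^2 * |deriv u x| + (1/2) * |deriv v x| * (v x - u x)^2 := by
          calc |f x| ≤ |(v x - u x)^2 * deriv u x| + |(1/2) * deriv v x * (v x - u x)^2| :=
                abs_sub _ _
            _ = (v x - u x)^2 * |deriv u x| + (1/2) * |deriv v x| * (v x - u x)^2 := by
                rw [abs_mul, abs_mul, abs_mul, abs_pow, sq_abs]
                norm_num
        have hsq : (0:ℝ) ≤ (v x - u x)^2 := sq_nonneg _
        calc |f x| ≤ (v x - u x)^2 * |deriv u x| + (1/2) * |deriv v x| * (v x - u x)^2 := h1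
          _ ≤ (v x - u x)^2 * Mu + (1/2) * Mv * (v x - u x)^2 := by
              gcongr
              exacts [hMu_le x, hMv_le x]
          _ = ((1/2) * Mv + Mu) * (v x - u x)^2 := by ring
    _ = ((1/2) * Mv + Mu) * ∫ x : ℝ, (v x - u x)^2 := integral_const_mul _ _
end
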